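/- Let f(s) = ∑_{n≥1} r(n) n^{-s} be a Dirichlet series with nonnegative real coefficients r(n), and suppose f(s) = g(s)·L(s), where g(s) = ∑ c(n) n^{-s} is absolutely convergent for Re(s) > 1/2, and L(s) = ∑ b(n) n^{-s} with b(n) ≥ 0 converges for Re(s) > 1, extends meromorphically with a simple pole at s = 1, and g(1) = 0. Then by Landau's theorem f converges for Re(s) > σ₀ for some σ₀ ≤ 1/2, and hence ∑_{n≥1} r(n)/n converges. Conclude: if additionally ∑_n r(n)/n diverges, then g(1) ≠ 0. -/

import Mathlib

open Filter Complex LSeries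
open scoped LSeries.notation

/-- Landau-type nonvanishing: let `r = c ⋆ b` have nonnegative coefficients, where
`g(s) = ∑ c n / n^s` is absolutely convergent for `Re s > 1/2` and `L(s) = ∑ b n / n^s`
(with `b n ≥ 0`) converges for `Re s > 1` and continues meromorphically to
`Re s > 1/2` with a simple pole at `s = 1`.  If `∑ r n / n` diverges, then
`g(1) = ∑ c n / n ≠ 0`. -/
theorem landau_nonvanishing
    (r c b : ℕ → ℝ)
    (hr : ∀ n, 0 ≤ r n) (hbpos : ∀ n, 0 ≤ b n)
    (hconv : ∀ n : ℕ, 1 ≤ n → r n = ∑ d ∈ n.divisors, c d * b (n / d))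
    (hg : ∀ σ : ℝ, 1 / 2 < σ → Summable (fun n : ℕ => |c n| / (n : ℝ) ^ σ))
    (hbconv : ∀ σ : ℝ, 1 < σ → Summable (fun n : ℕ => b n / (n : ℝ) ^ σ))
    (hL : ∃ (Lfun : ℂ → ℂ) (R : ℂ), R ≠ 0 ∧
      AnalyticOnNhd ℂ (fun s => Lfun s - R / (s - 1)) {s : ℂ | 1 / 2 < s.re} ∧
      ∀ s : ℂ, 1 < s.re → Lfun s = ∑' n : ℕ, (b n : ℂ) / (n : ℂ) ^ s)
    (hdiv : ¬ Summable (fun n : ℕ => r n / n)) :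
    (∑' n : ℕ, c n / (n : ℝ)) ≠ 0 := by
  intro h0
  obtain ⟨Lfun, R, hR, hLa, hLeq⟩ := hL
  set cC : ℕ → ℂ := fun n => (c n : ℂ) with hcC
  set bC : ℕ → ℂ := fun n => (b n : ℂ) with hbC
  set rC : ℕ → ℂ := fun n => (r n : ℂ) with hrC
  -- summability of the g-series on Re s > 1/2
  have hgS : ∀ s : ℂ, 1 / 2 < s.re → LSeriesSummable cC s := by
    intro s hs
    refine Summable.of_norm ?_
    refine Summable.of_nonneg_of_le (fun n => norm_nonneg _) (fun n => ?_) (hg s.re hs)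
    rw [norm_term_eq]
    split
    · positivity
    · rw [Complex.norm_real, Real.norm_eq_abs]
  have hbS : ∀ s : ℂ, 1 < s.re → LSeriesSummable bC s := by
    intro s hs
    refine Summable.of_norm ?_
    refine Summable.of_nonneg_of_le (fun n => norm_nonneg _) (fun n => ?_) (hbconv s.re hs)
    rw [norm_term_eq]
    split
    · exact div_nonneg (hbpos _) (Real.rpow_nonneg (Nat.cast_nonneg _) _)
    · rw [Complex.norm_real, Real.norm_eq_abs, _root_.abs_of_nonneg (hbpos _)]
  -- the abscissa of g is at most 1/2
  have habs : abscissaOfAbsConv cC ≤ ((1 / 2 : ℝ) : EReal) := by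
    refine abscissaOfAbsConv_le_of_forall_lt_LSeriesSummable fun y hy => ?_
    exact hgS y (by simpa using hy)
  -- g is differentiable at 1
  have hmem : abscissaOfAbsConv cC < ((1 : ℂ)).re := by
    refine lt_of_le_of_lt habs ?_
    rw [Complex.one_re]
    exact_mod_cast (by norm_num : (1/2 : ℝ) < 1)
  have hgdiff : DifferentiableAt ℂ (LSeries cC) 1 :=
    ((LSeries_analyticOnNhd cC) 1 hmem).differentiableAt
  -- g 1 = 0
  have hsum1 : Summable fun n : ℕ => c n / (n : ℝ) := by
    have h1 := hg 1 (by norm_num)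
    simp only [Real.rpow_one] at h1
    refine Summable.of_abs ?_
    refine h1.of_nonneg_of_le (fun n => abs_nonneg _) (fun n => ?_)
    rw [abs_div, Nat.abs_cast]
  have hg1 : LSeries cC 1 = 0 := by
    have : LSeries cC 1 = ((∑' n : ℕ, c n / (n : ℝ) : ℝ) : ℂ) := by
      rw [Complex.ofReal_tsum]
      refine tsum_congr fun n => ?_
      rcases eq_or_ne n 0 with rfl | hn
      · simp [LSeries.term_zero]
      · rw [term_of_ne_zero hn, cpow_one, hcC, Complex.ofReal_div, Complex.ofReal_natCast]
    rw [this, h0, Complex.ofReal_zero]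
  -- the convolution identity
  have hconvC : ∀ {n : ℕ}, n ≠ 0 → (cC ⍟ bC) n = rC n := by
    intro n hn
    rw [LSeries.convolution_def]
    show ∑ p ∈ n.divisorsAntidiagonal, cC p.1 * bC p.2 = rC n
    rw [Nat.sum_divisorsAntidiagonal (f := fun x y => cC x * bC y)]
    show _ = ((r n : ℂ))
    rw [hconv n (Nat.one_le_iff_ne_zero.mpr hn)]
    push_cast
    rfl
  have hrS : ∀ s : ℂ, 1 < s.re → LSeriesSummable rC s := fun s hs =>
    (LSeriesSummable_congr s hconvC).mp <|
      (hgS s (by linarith)).convolution (hbS s hs)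
  have hprod : ∀ s : ℂ, 1 < s.re → LSeries rC s = LSeries cC s * Lfun s := by
    intro s hs
    rw [← LSeries_congr hconvC s,
      LSeries_convolution' (hgS s (by linarith)) (hbS s hs), hLeq s hs]
    congr 1
    refine tsum_congr fun n => ?_
    refine term_of_ne_zero' (fun h => ?_) bC n
    rw [h] at hs
    norm_num [Complex.zero_re] at hs
  -- limit along σ → 1⁺
  have htend1 : Tendsto (fun σ : ℝ => ((σ : ℂ)))
      (nhdsWithin 1 (Set.Ioi 1)) (nhdsWithin 1 {(1 : ℂ)}ᶜ) := by
    rw [tendsto_nhdsWithin_iff]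
    constructor
    · exact (Complex.continuous_ofReal.tendsto 1).mono_left nhdsWithin_le_nhds
    · filter_upwards [self_mem_nhdsWithin] with σ hσ
      simp only [Set.mem_compl_iff, Set.mem_singleton_iff]
      intro h
      have h1 : σ = 1 := by exact_mod_cast h
      rw [h1] at hσ
      exact lt_irrefl _ (Set.mem_Ioi.mp hσ)
  have hslope : Tendsto (fun s : ℂ => LSeries cC s / (s - 1)) (nhdsWithin 1 {(1:ℂ)}ᶜ)
      (nhds (deriv (LSeries cC) 1)) := by
    have h1 := hasDerivAt_iff_tendsto_slope.mp hgdiff.hasDerivAt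
    refine h1.congr' ?_
    filter_upwards [self_mem_nhdsWithin] with s hs
    rw [slope_def_field, hg1, sub_zero]
  have hφcont : ContinuousAt (fun s : ℂ => Lfun s - R / (s - 1)) 1 := by
    refine (hLa 1 ?_).continuousAt
    simp only [Set.mem_setOf_eq, Complex.one_re]
    norm_num
  have hgc : ContinuousAt (LSeries cC) 1 := hgdiff.continuousAt
  have hT : Tendsto (fun σ : ℝ => LSeries rC σ) (nhdsWithin 1 (Set.Ioi 1))
      (nhds (R * deriv (LSeries cC) 1)) := by
    have h1 : Tendsto (fun s : ℂ =>
        LSeries cC s * (Lfun s - R / (s - 1)) + R * (LSeries cC s / (s - 1)))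
        (nhdsWithin 1 {(1:ℂ)}ᶜ) (nhds (R * deriv (LSeries cC) 1)) := by
      have h2 := ((hgc.tendsto.mono_left nhdsWithin_le_nhds).mul
        (hφcont.tendsto.mono_left nhdsWithin_le_nhds)).add (hslope.const_mul R)
      simpa [hg1] using h2
    refine (h1.comp htend1).congr' ?_
    filter_upwards [self_mem_nhdsWithin] with σ hσ
    have hσ1 : 1 < ((σ : ℂ)).re := by simpa using hσ
    rw [Function.comp_apply, hprod _ hσ1]
    ring
  -- the real series and its value
  have hreal : ∀ σ : ℝ, 1 < σ → (Summable fun n : ℕ => r n / (n:ℝ) ^ σ) ∧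
      LSeries rC (σ : ℂ) = ((∑' n : ℕ, r n / (n:ℝ) ^ σ : ℝ) : ℂ) := by
    intro σ hσ
    have hterm : ∀ n : ℕ, term rC (σ : ℂ) n = ((r n / (n:ℝ) ^ σ : ℝ) : ℂ) := by
      intro n
      rcases eq_or_ne n 0 with rfl | hn
      · simp [LSeries.term_zero, Real.zero_rpow (by linarith : σ ≠ 0)]
      · rw [term_of_ne_zero hn, Complex.ofReal_div, hrC,
          ← Complex.ofReal_natCast n, ← Complex.ofReal_cpow (Nat.cast_nonneg n)]
    have hS : LSeriesSummable rC (σ : ℂ) := hrS _ (by simpa using hσ)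
    have hS' : Summable fun n : ℕ => ((r n / (n:ℝ) ^ σ : ℝ) : ℂ) := by
      refine hS.congr fun n => hterm n
    refine ⟨Complex.summable_ofReal.mp hS', ?_⟩
    rw [LSeries, tsum_congr hterm, ← Complex.ofReal_tsum]
  have hTre : Tendsto (fun σ : ℝ => ∑' n : ℕ, r n / (n:ℝ) ^ σ)
      (nhdsWithin 1 (Set.Ioi 1)) (nhds ((R * deriv (LSeries cC) 1).re)) := by
    have h1 := (Complex.continuous_re.tendsto _).comp hT
    refine h1.congr' ?_
    filter_upwards [self_mem_nhdsWithin] with σ hσ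
    rw [Function.comp_apply, (hreal σ hσ).2, Complex.ofReal_re]
  set M : ℝ := (R * deriv (LSeries cC) 1).re + 1 with hM
  refine hdiv ?_
  refine summable_of_sum_range_le (c := M)
    (fun n => div_nonneg (hr n) (Nat.cast_nonneg n)) (fun N => ?_)
  have hpt : Tendsto (fun σ : ℝ => ∑ i ∈ Finset.range N, r i / (i:ℝ) ^ σ)
      (nhdsWithin 1 (Set.Ioi 1)) (nhds (∑ i ∈ Finset.range N, r i / (i:ℝ))) := by
    refine tendsto_finset_sum _ fun i _ => ?_
    rcases eq_or_ne i 0 with rfl | hi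
    · have hev : (fun σ : ℝ => r 0 / ((0:ℕ):ℝ) ^ σ) =ᶠ[nhdsWithin 1 (Set.Ioi 1)]
          fun _ => (0:ℝ) := by
        filter_upwards [self_mem_nhdsWithin] with σ hσ
        rw [Nat.cast_zero, Real.zero_rpow (by linarith [Set.mem_Ioi.mp hσ] : σ ≠ 0), div_zero]
      have : r 0 / ((0:ℕ):ℝ) = 0 := by simp
      rw [this]
      exact Tendsto.congr' hev.symm tendsto_const_nhds
    · have hi0 : (0:ℝ) < (i:ℝ) := by exact_mod_cast Nat.pos_of_ne_zero hi
      have hc : ContinuousAt (fun σ : ℝ => (i:ℝ) ^ σ) 1 := by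
        have h1 := Real.continuousAt_rpow ((i:ℝ), (1:ℝ)) (Or.inl (ne_of_gt hi0))
        exact h1.comp ((continuous_const.prodMk continuous_id).continuousAt)
      have h2 : Tendsto (fun σ : ℝ => r i / (i:ℝ) ^ σ) (nhdsWithin 1 (Set.Ioi 1))
          (nhds (r i / (i:ℝ) ^ (1:ℝ))) := by
        refine Tendsto.div tendsto_const_nhds (hc.tendsto.mono_left nhdsWithin_le_nhds) ?_
        rw [Real.rpow_one]; exact ne_of_gt hi0
      rwa [Real.rpow_one] at h2
  have hev : ∀ᶠ σ in nhdsWithin (1:ℝ) (Set.Ioi 1),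
      (∑ i ∈ Finset.range N, r i / (i:ℝ) ^ σ) ≤ M := by
    filter_upwards [hTre.eventually_lt_const (lt_add_one _), self_mem_nhdsWithin] with σ h1 h2
    refine le_trans ?_ h1.le
    exact Summable.sum_le_tsum (Finset.range N)
      (fun i _ => div_nonneg (hr i) (Real.rpow_nonneg (Nat.cast_nonneg i) σ)) (hreal σ h2).1
  exact le_of_tendsto hpt hev
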